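/- The displacement interpolation between zero-mean Gaussians satisfies the geodesic property: for Σ_t = Σ₀^{-1/2}((1−t)Σ₀ + t(Σ₀^{1/2}Σ_fΣ₀^{1/2})^{1/2})² Σ₀^{-1/2} and the Gaussian Wasserstein distance d(A,B)² = trace(A + B − 2(A^{1/2}BA^{1/2})^{1/2}), one has d(Σ_s, Σ_t) = (t−s)·d(Σ₀, Σ_f) for all 0 ≤ s < t ≤ 1. -/

import Mathlib

set_option autoImplicit false
open Matrix
noncomputable section

section
open scoped ComplexOrder

/-- The square root of a positive semidefinite matrix, as defined in Mathlib (Dec 2024),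
since removed from Mathlib. -/
noncomputable def Matrix.PosSemidef.sqrt {n 𝕜 : Type*} [Fintype n] [RCLike 𝕜] [DecidableEq n]
    {A : Matrix n n 𝕜} (hA : A.PosSemidef) : Matrix n n 𝕜 :=
  hA.1.eigenvectorUnitary.1 * diagonal ((↑) ∘ (√·) ∘ hA.1.eigenvalues) *
  (star hA.1.eigenvectorUnitary : Matrix n n 𝕜)

theorem Matrix.PosSemidef.posSemidef_sqrt {n 𝕜 : Type*} [Fintype n] [RCLike 𝕜] [DecidableEq n]
    {A : Matrix n n 𝕜} (hA : A.PosSemidef) : hA.sqrt.PosSemidef := by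
  apply PosSemidef.mul_mul_conjTranspose_same
  refine posSemidef_diagonal_iff.mpr fun i ↦ ?_
  rw [Function.comp_apply, RCLike.nonneg_iff]
  constructor
  · simp only [RCLike.ofReal_re]
    exact Real.sqrt_nonneg _
  · simp only [RCLike.ofReal_im]

end

section
open scoped MatrixOrder

theorem Matrix.PosSemidef.sqrt_eq_cfc_sqrt {n : ℕ} {A : Matrix (Fin n) (Fin n) ℝ}
    (hA : A.PosSemidef) : hA.sqrt = CFC.sqrt A := by
  rw [CFC.sqrt_eq_real_sqrt A hA.nonneg, cfcₙ_eq_cfc, hA.1.cfc_eq, IsHermitian.cfc, Unitary.conjStarAlgAut_apply,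
    Matrix.PosSemidef.sqrt]

theorem Matrix.PosSemidef.sqrt_mul_self {n : ℕ} {A : Matrix (Fin n) (Fin n) ℝ}
    (hA : A.PosSemidef) : hA.sqrt * hA.sqrt = A := by
  rw [hA.sqrt_eq_cfc_sqrt]
  exact CFC.sqrt_mul_sqrt_self A hA.nonneg

theorem Matrix.PosSemidef.eq_sqrt_of_sq_eq {n : ℕ} {A : Matrix (Fin n) (Fin n) ℝ}
    (hA : A.PosSemidef) {B : Matrix (Fin n) (Fin n) ℝ} (hB : B.PosSemidef) (h : A ^ 2 = B) :
    A = hB.sqrt := by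
  rw [hB.sqrt_eq_cfc_sqrt]
  exact (CFC.sqrt_unique (by rw [← h, sq]) hA.nonneg).symm

end

/-- The middle matrix `Σ₀^{1/2} Σf Σ₀^{1/2}` is positive semidefinite. -/
theorem midPosSemidef {n : ℕ} {S0 Sf : Matrix (Fin n) (Fin n) ℝ}
    (h0 : S0.PosDef) (hf : Sf.PosDef) :
    (h0.posSemidef.sqrt * Sf * h0.posSemidef.sqrt).PosSemidef := by
  have h := hf.posSemidef.mul_mul_conjTranspose_same h0.posSemidef.sqrt
  rwa [h0.posSemidef.posSemidef_sqrt.isHermitian] at h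

/-- Displacement interpolation between `N(0,Σ₀)` and `N(0,Σf)` covariances:
`Σ_t = Σ₀^{-1/2}((1−t)Σ₀ + t(Σ₀^{1/2}ΣfΣ₀^{1/2})^{1/2})² Σ₀^{-1/2}`. -/
noncomputable def dispInterp {n : ℕ} {S0 Sf : Matrix (Fin n) (Fin n) ℝ}
    (h0 : S0.PosDef) (hf : Sf.PosDef) (t : ℝ) : Matrix (Fin n) (Fin n) ℝ :=
  (h0.posSemidef.sqrt)⁻¹ * ((1 - t) • S0 + t • (midPosSemidef h0 hf).sqrt) ^ 2
    * (h0.posSemidef.sqrt)⁻¹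


/-- The middle matrix for PSD matrices. -/
theorem midPosSemidef' {n : ℕ} {A B : Matrix (Fin n) (Fin n) ℝ}
    (hA : A.PosSemidef) (hB : B.PosSemidef) :
    (hA.sqrt * B * hA.sqrt).PosSemidef := by
  have h := hB.mul_mul_conjTranspose_same hA.sqrt
  rwa [hA.posSemidef_sqrt.isHermitian] at h

/-- The Bures–Wasserstein distance `d(A,B) = sqrt(trace(A + B − 2(A^{1/2}BA^{1/2})^{1/2}))`. -/
noncomputable def bwDist {n : ℕ} (A B : Matrix (Fin n) (Fin n) ℝ)
    (hA : A.PosSemidef) (hB : B.PosSemidef) : ℝ :=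
  Real.sqrt ((A + B - 2 • (midPosSemidef' hA hB).sqrt).trace)

/- ### Auxiliary lemmas -/

lemma psd_smul {n : ℕ} {A : Matrix (Fin n) (Fin n) ℝ} (hA : A.PosSemidef) {c : ℝ} (hc : 0 ≤ c) :
    (c • A).PosSemidef := by
  exact hA.smul hc

lemma pd_smul {n : ℕ} {A : Matrix (Fin n) (Fin n) ℝ} (hA : A.PosDef) {c : ℝ} (hc : 0 < c) :
    (c • A).PosDef := by
  exact hA.smul hc

lemma psd_add {n : ℕ} {A B : Matrix (Fin n) (Fin n) ℝ} (hA : A.PosSemidef) (hB : B.PosSemidef) :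
    (A + B).PosSemidef := by
  exact hA.add hB

lemma pd_conj {n : ℕ} {A B : Matrix (Fin n) (Fin n) ℝ} (hA : A.PosDef) (hB : IsUnit B.det) :
    (Bᴴ * A * B).PosDef := by
  exact hA.conjTranspose_mul_mul_same
    (Matrix.mulVec_injective_iff_isUnit.2 ((Matrix.isUnit_iff_isUnit_det B).2 hB))

lemma pd_conj' {n : ℕ} {A B : Matrix (Fin n) (Fin n) ℝ} (hA : A.PosDef) (hB : IsUnit B.det) :
    (B * A * Bᴴ).PosDef := by
  have hBH : IsUnit (Bᴴ).det := by
    rwa [Matrix.det_conjTranspose, star_trivial]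
  simpa only [conjTranspose_conjTranspose] using pd_conj hA hBH

lemma psd_posDef {n : ℕ} {A : Matrix (Fin n) (Fin n) ℝ} (hA : A.PosSemidef) (h : A.det ≠ 0) :
    A.PosDef := by
  have hsq : hA.sqrt * hA.sqrt = A := hA.sqrt_mul_self
  have hsdet : hA.sqrt.det ≠ 0 := by
    intro hd
    exact h (by rw [← hsq, det_mul, hd, zero_mul])
  have hform : hA.sqrtᴴ * 1 * hA.sqrt = A := by
    rw [mul_one, hA.posSemidef_sqrt.1.eq, hsq]
  have := pd_conj (Matrix.PosDef.one) (isUnit_iff_ne_zero.mpr hsdet)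
  rwa [hform] at this

/-- Uniqueness of the PSD square root applied to the BW cross term. -/
lemma crossEq {n : ℕ} {A B Gm : Matrix (Fin n) (Fin n) ℝ}
    (hA : A.PosSemidef) (hB : B.PosSemidef) (hGm : Gm.PosSemidef)
    (hBeq : Gm * A * Gm = B) :
    (midPosSemidef' hA hB).sqrt = hA.sqrt * Gm * hA.sqrt := by
  have hpsd : (hA.sqrt * Gm * hA.sqrt).PosSemidef := by
    have h := hGm.mul_mul_conjTranspose_same hA.sqrt
    rwa [hA.posSemidef_sqrt.isHermitian] at h
  refine (hpsd.eq_sqrt_of_sq_eq (midPosSemidef' hA hB) ?_).symm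
  rw [pow_two, ← hBeq]
  simp only [← mul_assoc]
  rw [mul_assoc (hA.sqrt * Gm) hA.sqrt hA.sqrt, hA.sqrt_mul_self]

/-- the displacement interpolation is a constant-speed geodesic:
`d(Σ_s, Σ_t) = (t − s)·d(Σ₀, Σf)` for all `0 ≤ s < t ≤ 1`. -/
theorem stmt4 {n : ℕ} (S0 Sf : Matrix (Fin n) (Fin n) ℝ)
    (h0 : S0.PosDef) (hf : Sf.PosDef) :
    ∀ s t : ℝ, 0 ≤ s → s < t → t ≤ 1 →
      ∀ (hs : (dispInterp h0 hf s).PosSemidef) (ht : (dispInterp h0 hf t).PosSemidef),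
        bwDist _ _ hs ht = (t - s) * bwDist S0 Sf h0.posSemidef hf.posSemidef := by
  intro s t hs0 hst ht1 hs ht
  have h1s : (0:ℝ) < 1 - s := by linarith
  have hts : (0:ℝ) < t - s := by linarith
  have h1t : (0:ℝ) ≤ 1 - t := by linarith
  set R := h0.posSemidef.sqrt with hRdef
  have hRsd : R.PosSemidef := h0.posSemidef.posSemidef_sqrt
  have hRR : R * R = S0 := h0.posSemidef.sqrt_mul_self
  have hRdet : R.det ≠ 0 := by
    intro hd
    exact h0.det_pos.ne' (by rw [← hRR, det_mul, hd, zero_mul])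
  have hRunit : IsUnit R.det := isUnit_iff_ne_zero.mpr hRdet
  have hRinv : R * R⁻¹ = 1 := mul_nonsing_inv R hRunit
  have hRinv' : R⁻¹ * R = 1 := nonsing_inv_mul R hRunit
  have hRisym : (R⁻¹)ᴴ = R⁻¹ := by rw [conjTranspose_nonsing_inv, hRsd.1.eq]
  set M := (midPosSemidef h0 hf).sqrt with hMdef
  have hMsd : M.PosSemidef := (midPosSemidef h0 hf).posSemidef_sqrt
  have hMM : M * M = R * Sf * R := (midPosSemidef h0 hf).sqrt_mul_self
  have hmidPD : (R * Sf * R).PosDef := by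
    have h := pd_conj' hf hRunit
    rwa [hRsd.1.eq] at h
  have hMdet : M.det ≠ 0 := by
    intro hd
    exact hmidPD.det_pos.ne' (by rw [← hMM, det_mul, hd, zero_mul])
  have hM : M.PosDef := psd_posDef hMsd hMdet
  set T := R⁻¹ * M * R⁻¹ with hTdef
  have hRinvUnit : IsUnit (R⁻¹).det := (Matrix.isUnit_nonsing_inv_det R hRunit)
  have hT : T.PosDef := by
    have h := pd_conj' hM hRinvUnit
    rwa [hRisym] at h
  have hTdet : IsUnit T.det := hT.det_pos.ne'.isUnit
  have cancel : ∀ X : Matrix (Fin n) (Fin n) ℝ, R⁻¹ * (R * X * R) * R⁻¹ = X := by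
    intro X
    simp only [← mul_assoc]
    rw [hRinv', one_mul, mul_assoc, hRinv, mul_one]
  have hRTR : R * T * R = M := by
    rw [hTdef]
    simp only [← mul_assoc]
    rw [hRinv, one_mul, mul_assoc, hRinv', mul_one]
  have hC : ∀ u : ℝ, R * ((1-u) • (1:Matrix (Fin n) (Fin n) ℝ) + u • T) * R
      = (1-u) • S0 + u • M := by
    intro u
    simp only [Matrix.mul_add, Matrix.add_mul, Matrix.mul_smul, Matrix.smul_mul, Matrix.mul_one]
    rw [hRR, hRTR]
  have key1 : ∀ u : ℝ, dispInterp h0 hf u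
      = ((1-u) • (1:Matrix (Fin n) (Fin n) ℝ) + u • T) * S0
        * ((1-u) • (1:Matrix (Fin n) (Fin n) ℝ) + u • T) := by
    intro u
    have h1 : (1-u) • S0 + u • M
        = R * ((1-u) • (1:Matrix (Fin n) (Fin n) ℝ) + u • T) * R := (hC u).symm
    show R⁻¹ * ((1-u) • S0 + u • M) ^ 2 * R⁻¹ = _
    rw [h1, pow_two]
    rw [show (R * ((1-u) • (1:Matrix (Fin n) (Fin n) ℝ) + u • T) * R)
          * (R * ((1-u) • (1:Matrix (Fin n) (Fin n) ℝ) + u • T) * R)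
        = R * (((1-u) • (1:Matrix (Fin n) (Fin n) ℝ) + u • T) * S0
          * ((1-u) • (1:Matrix (Fin n) (Fin n) ℝ) + u • T)) * R from by
      simp only [← mul_assoc]
      rw [mul_assoc (R * ((1-u) • (1:Matrix (Fin n) (Fin n) ℝ) + u • T)) R R, hRR]]
    exact cancel _
  have hSf : T * S0 * T = Sf := by
    have h1 : T * S0 * T = R⁻¹ * (R * Sf * R) * R⁻¹ := by
      rw [hTdef, ← hRR, ← hMM]
      simp only [← mul_assoc]
      rw [mul_assoc (R⁻¹ * M) R⁻¹ R, hRinv', mul_one, mul_assoc (R⁻¹ * M) R R⁻¹, hRinv, mul_one]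
    rw [h1, cancel]
  -- the matrix E and the transport matrix G
  set E := (1-s) • T⁻¹ + s • (1 : Matrix (Fin n) (Fin n) ℝ) with hEdef
  have hE : E.PosDef := (pd_smul hT.inv h1s).add_posSemidef (psd_smul Matrix.PosSemidef.one hs0)
  have hEdet : IsUnit E.det := hE.det_pos.ne'.isUnit
  have hET : E * T = (1-s) • (1:Matrix (Fin n) (Fin n) ℝ) + s • T := by
    rw [hEdef, Matrix.add_mul, Matrix.smul_mul, Matrix.smul_mul,
      nonsing_inv_mul T hTdet, one_mul]
  have hTE : T * E = (1-s) • (1:Matrix (Fin n) (Fin n) ℝ) + s • T := by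
    rw [hEdef, Matrix.mul_add, Matrix.mul_smul, Matrix.mul_smul,
      mul_nonsing_inv T hTdet, mul_one]
  have hEinvSs : E⁻¹ * ((1-s) • (1:Matrix (Fin n) (Fin n) ℝ) + s • T) = T := by
    rw [← hET, ← mul_assoc, nonsing_inv_mul E hEdet, one_mul]
  have hSsEinv : ((1-s) • (1:Matrix (Fin n) (Fin n) ℝ) + s • T) * E⁻¹ = T := by
    rw [← hTE, mul_assoc, mul_nonsing_inv E hEdet, mul_one]
  set G := ((1-t)/(1-s)) • (1:Matrix (Fin n) (Fin n) ℝ) + ((t-s)/(1-s)) • E⁻¹ with hGdef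
  have hGPsd : G.PosSemidef :=
    psd_add (psd_smul Matrix.PosSemidef.one (div_nonneg h1t h1s.le))
      (psd_smul hE.inv.posSemidef (div_nonneg hts.le h1s.le))
  have ha : (1-t)/(1-s) * (1-s) = 1 - t := div_mul_cancel₀ _ h1s.ne'
  have hb : (1-t)/(1-s) * s + (t-s)/(1-s) = t := by
    field_simp
    ring
  have hGSs : G * ((1-s) • (1:Matrix (Fin n) (Fin n) ℝ) + s • T)
      = (1-t) • (1:Matrix (Fin n) (Fin n) ℝ) + t • T := by
    rw [hGdef, Matrix.add_mul, Matrix.smul_mul, Matrix.smul_mul, one_mul, hEinvSs]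
    rw [smul_add, smul_smul, smul_smul, add_assoc, ← add_smul, ha, hb]
  have hSsG : ((1-s) • (1:Matrix (Fin n) (Fin n) ℝ) + s • T) * G
      = (1-t) • (1:Matrix (Fin n) (Fin n) ℝ) + t • T := by
    rw [hGdef, Matrix.mul_add, Matrix.mul_smul, Matrix.mul_smul, mul_one, hSsEinv]
    rw [smul_add, smul_smul, smul_smul, add_assoc, ← add_smul, ha, hb]
  have hGdisp : G * dispInterp h0 hf s * G = dispInterp h0 hf t := by
    rw [key1 s, key1 t]
    simp only [← mul_assoc]
    rw [hGSs, mul_assoc (((1-t) • (1:Matrix (Fin n) (Fin n) ℝ) + t • T) * S0)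
      ((1-s) • (1:Matrix (Fin n) (Fin n) ℝ) + s • T) G, hSsG]
  have hsq := crossEq hs ht hGPsd hGdisp
  have hXst : ((midPosSemidef' hs ht).sqrt).trace
      = ((((1-s) • (1:Matrix (Fin n) (Fin n) ℝ) + s • T) * S0)
        * ((1-t) • (1:Matrix (Fin n) (Fin n) ℝ) + t • T)).trace := by
    rw [hsq, Matrix.trace_mul_cycle hs.sqrt G hs.sqrt, hs.sqrt_mul_self, key1 s,
      mul_assoc ((((1-s) • (1:Matrix (Fin n) (Fin n) ℝ) + s • T)) * S0)
        ((1-s) • (1:Matrix (Fin n) (Fin n) ℝ) + s • T) G, hSsG]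
  have hsq0 := crossEq h0.posSemidef hf.posSemidef hT.posSemidef hSf
  have hX0f : ((midPosSemidef' h0.posSemidef hf.posSemidef).sqrt).trace = (T * S0).trace := by
    rw [hsq0, ← hRdef, Matrix.trace_mul_cycle R T R, hRR, trace_mul_comm]
  have trf : ∀ u v : ℝ, ((((1-u) • (1:Matrix (Fin n) (Fin n) ℝ) + u • T) * S0
        * ((1-v) • (1:Matrix (Fin n) (Fin n) ℝ) + v • T)).trace)
      = (1-u)*(1-v)*S0.trace + ((1-u)*v + u*(1-v))*(T*S0).trace + u*v*(T*S0*T).trace := by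
    intro u v
    simp only [Matrix.add_mul, Matrix.mul_add, Matrix.smul_mul, Matrix.mul_smul, Matrix.one_mul,
      Matrix.mul_one, smul_smul, trace_add, trace_smul, smul_eq_mul]
    rw [show (S0 * T).trace = (T * S0).trace from trace_mul_comm S0 T]
    ring
  have key : (dispInterp h0 hf s + dispInterp h0 hf t - 2 • (midPosSemidef' hs ht).sqrt).trace
      = (t-s)^2 * ((S0 + Sf - 2 • (midPosSemidef' h0.posSemidef hf.posSemidef).sqrt).trace) := by
    simp only [trace_sub, trace_add, trace_smul]
    simp only [smul_eq_mul, nsmul_eq_mul, Nat.cast_ofNat]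
    rw [hXst, hX0f, key1 s, key1 t, trf s s, trf t t, trf s t, ← hSf]
    ring
  rw [bwDist, bwDist, key, Real.sqrt_mul (sq_nonneg (t-s)), Real.sqrt_sq hts.le]
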